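/- arXiv:1401.1805 — 2 statements merged into one kernel-verified Lean document; each statement's English description precedes it below -/
import Mathlib

section
/- For integers a ≥ 2 and t ≥ 2, ∫_0^{1/t}(1 − pt)(1−p)^{−1} β_{a,a(t−1)}(p) dp = P(X = a) − (1/(a(t−1)−1))·P(X > a), where X ~ Binomial(at−1, 1/t) and β_{a,a(t−1)} is the Beta(a, a(t−1)) density. In particular, for t = 2: P(S_{a,a} ≤ 1/2) = (1 + 1/(a−1))·C(2a−1, a)·2^{−(2a−1)} − 1/(2(a−1)). -/
open Finset

/-- The Beta function `B(α,β) = ∫_0^1 x^{α-1}(1-x)^{β-1} dx`. -/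
noncomputable def Betafn (α β : ℝ) : ℝ :=
  ∫ x in (0:ℝ)..1, x ^ (α - 1) * (1 - x) ^ (β - 1)

/-- The Beta(α,β) density. -/
noncomputable def betaDens (α β p : ℝ) : ℝ :=
  p ^ (α - 1) * (1 - p) ^ (β - 1) / Betafn α β

/-- The Binomial(n,p) point probability `P(X_{n,p} = k)`. -/
noncomputable def binomProb (n : ℕ) (p : ℝ) (k : ℕ) : ℝ :=
  (Nat.choose n k : ℝ) * p ^ k * (1 - p) ^ (n - k)

noncomputable def Ssum (n k : ℕ) (x : ℝ) : ℝ :=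
  ∑ j ∈ Finset.Icc k n, (n.choose j : ℝ) * x ^ j * (1 - x) ^ (n - j)

lemma sum_Icc_range (f : ℕ → ℝ) (k n : ℕ) :
    ∑ j ∈ Finset.Icc k n, f j = ∑ i ∈ Finset.range (n + 1 - k), f (k + i) := by
  rw [← Finset.Ico_add_one_right_eq_Icc, Finset.sum_Ico_eq_sum_range]

lemma telescope_Icc (f : ℕ → ℝ) {k n : ℕ} (h : k ≤ n) :
    ∑ j ∈ Finset.Icc k n, (f j - f (j + 1)) = f k - f (n + 1) := by
  rw [sum_Icc_range (fun j => f j - f (j+1)) k n]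
  have h2 := Finset.sum_range_sub' (fun i => f (k + i)) (n + 1 - k)
  simp only [Nat.add_zero, Nat.add_succ] at h2 ⊢
  rw [h2, show k + (n + 1 - k) = n + 1 by omega]

lemma hasDerivAt_Ssum (n k : ℕ) (hk : 1 ≤ k) (hkn : k ≤ n) (x : ℝ) :
    HasDerivAt (fun p => Ssum n k p)
      ((k : ℝ) * n.choose k * (x ^ (k - 1) * (1 - x) ^ (n - k))) x := by
  have hterm : ∀ j ∈ Finset.Icc k n,
      HasDerivAt (fun p : ℝ => (n.choose j : ℝ) * p ^ j * (1 - p) ^ (n - j))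
        ((((j : ℕ) : ℝ) * n.choose j * x ^ (j - 1) * (1 - x) ^ (n - j))
          - (((j + 1 : ℕ) : ℝ) * n.choose (j + 1) * x ^ ((j + 1) - 1) * (1 - x) ^ (n - (j + 1)))) x := by
    intro j hj
    simp only [Finset.mem_Icc] at hj
    have h1 : HasDerivAt (fun p : ℝ => (n.choose j : ℝ) * p ^ j)
        ((n.choose j : ℝ) * ((j : ℝ) * x ^ (j - 1))) x :=
      (hasDerivAt_pow j x).const_mul _
    have h2 : HasDerivAt (fun p : ℝ => (1 - p) ^ (n - j))
        ((((n - j : ℕ) : ℝ) * (1 - x) ^ (n - j - 1)) * (-1)) x :=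
      (hasDerivAt_pow (n - j) (1 - x)).comp x ((hasDerivAt_id x).const_sub 1)
    have h3 := h1.mul h2
    convert h3 using 1
    · rfl
    · rfl
    · rfl
    have hc : ((n.choose (j + 1)) : ℝ) * ((j + 1 : ℕ) : ℝ)
        = (n.choose j : ℝ) * ((n - j : ℕ) : ℝ) := by
      exact_mod_cast congrArg (Nat.cast : ℕ → ℝ) (Nat.choose_succ_right_eq n j)
    have e1 : n - (j + 1) = n - j - 1 := by omega
    have e2 : (j + 1) - 1 = j := by omega
    rw [e1, e2]
    linear_combination (-(x ^ j * (1 - x) ^ (n - j - 1))) * hc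
  have hsum := HasDerivAt.fun_sum hterm
  convert hsum using 1
  · rfl
  · rfl
  · rfl
  have htel := telescope_Icc (fun j => ((j : ℕ) : ℝ) * n.choose j * x ^ (j - 1) * (1 - x) ^ (n - j)) hkn
  rw [htel, Nat.choose_eq_zero_of_lt (Nat.lt_succ_self n)]
  push_cast
  ring

lemma Ssum_zero (n k : ℕ) (hk : 1 ≤ k) : Ssum n k 0 = 0 := by
  unfold Ssum
  apply Finset.sum_eq_zero
  intro j hj
  simp only [Finset.mem_Icc] at hj
  rw [zero_pow (by omega : j ≠ 0)]
  ring

lemma integral_pow_eq (n k : ℕ) (hk : 1 ≤ k) (hkn : k ≤ n) (x : ℝ) :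
    ∫ p in (0:ℝ)..x, p ^ (k - 1) * (1 - p) ^ (n - k)
      = Ssum n k x / ((k : ℝ) * n.choose k) := by
  have hc : (0:ℝ) < (n.choose k : ℝ) := by exact_mod_cast Nat.choose_pos hkn
  have hk0 : (0:ℝ) < (k : ℝ) := by exact_mod_cast hk
  have hnz : (k : ℝ) * n.choose k ≠ 0 := by positivity
  have key : ∫ p in (0:ℝ)..x, (k : ℝ) * n.choose k * (p ^ (k - 1) * (1 - p) ^ (n - k))
      = Ssum n k x - Ssum n k 0 := by
    apply intervalIntegral.integral_eq_sub_of_hasDerivAt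
    · intro p _
      exact hasDerivAt_Ssum n k hk hkn p
    · apply Continuous.intervalIntegrable
      fun_prop
  rw [intervalIntegral.integral_const_mul, Ssum_zero n k hk, sub_zero] at key
  field_simp
  linarith [key]

lemma Betafn_nat (a b : ℕ) (ha : 1 ≤ a) (hb : 1 ≤ b) :
    Betafn a b = 1 / ((a : ℝ) * ((a + b - 1).choose a : ℝ)) := by
  have h1 : Betafn a b = ∫ x in (0:ℝ)..1, x ^ (a - 1) * (1 - x) ^ (b - 1) := by
    unfold Betafn
    apply intervalIntegral.integral_congr
    intro p _
    have e1 : ((a:ℝ) - 1) = ((a - 1 : ℕ) : ℝ) := by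
      rw [Nat.cast_sub ha, Nat.cast_one]
    have e2 : ((b:ℝ) - 1) = ((b - 1 : ℕ) : ℝ) := by
      rw [Nat.cast_sub hb, Nat.cast_one]
    simp only [e1, e2, Real.rpow_natCast]
  rw [h1]
  have e3 : (a + b - 1) - a = b - 1 := by omega
  have h2 := integral_pow_eq (a + b - 1) a ha (by omega) 1
  rw [e3] at h2
  rw [h2]
  have h3 : Ssum (a + b - 1) a 1 = 1 := by
    unfold Ssum
    rw [Finset.sum_eq_single (a + b - 1)]
    · simp
    · intro j hj hjne
      simp only [Finset.mem_Icc] at hj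
      rw [show (1:ℝ) - 1 = 0 by ring, zero_pow (by omega : a + b - 1 - j ≠ 0)]
      ring
    · intro h
      exact absurd (Finset.mem_Icc.2 ⟨by omega, le_refl _⟩) h
  rw [h3]

lemma Ssum_sub (n a : ℕ) (ha1 : a + 1 ≤ n) (x : ℝ) :
    Ssum (n - 1) a x - Ssum n (a + 1) x
      = ((n - 1).choose a : ℝ) * x ^ a * (1 - x) ^ (n - a) := by
  set u : ℕ → ℝ := fun j => ((n - 1).choose j : ℝ) * x ^ j * (1 - x) ^ (n - j) with hu
  have h1 : Ssum (n - 1) a x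
      = ∑ i ∈ Finset.range (n - a), ((n-1).choose (a + i) : ℝ) * x ^ (a + i) * (1 - x) ^ ((n-1) - (a + i)) := by
    unfold Ssum
    rw [sum_Icc_range, show (n - 1) + 1 - a = n - a by omega]
  have h2 : Ssum n (a + 1) x
      = ∑ i ∈ Finset.range (n - a), (n.choose (a + 1 + i) : ℝ) * x ^ (a + 1 + i) * (1 - x) ^ (n - (a + 1 + i)) := by
    unfold Ssum
    rw [sum_Icc_range, show n + 1 - (a + 1) = n - a by omega]
  rw [h1, h2, ← Finset.sum_sub_distrib]
  have key : ∀ i ∈ Finset.range (n - a),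
      ((n-1).choose (a + i) : ℝ) * x ^ (a + i) * (1 - x) ^ ((n-1) - (a + i))
        - (n.choose (a + 1 + i) : ℝ) * x ^ (a + 1 + i) * (1 - x) ^ (n - (a + 1 + i))
      = u (a + i) - u (a + i + 1) := by
    intro i hi
    simp only [Finset.mem_range] at hi
    have hin : a + i ≤ n - 1 := by omega
    set m := n - 1 - (a + i) with hm
    have em1 : n - (a + i) = m + 1 := by omega
    have em2 : n - (a + 1 + i) = m := by omega
    have em3 : n - (a + i + 1) = m := by omega
    have hpascal : (n.choose (a + 1 + i) : ℝ)
        = ((n-1).choose (a + i) : ℝ) + ((n-1).choose (a + i + 1) : ℝ) := by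
      have : n.choose (a + 1 + i) = (n-1).choose (a + i) + (n-1).choose (a + i + 1) := by
        rw [show a + 1 + i = (a + i) + 1 by omega, show n = (n - 1) + 1 by omega]
        rw [Nat.choose_succ_succ]
        congr 1 <;> congr 1 <;> omega
      exact_mod_cast this
    simp only [hu]
    rw [em1, em2, em3, hpascal]
    rw [show a + 1 + i = (a + i) + 1 by omega]
    rw [pow_succ x (a + i), pow_succ (1 - x) m]
    ring
  rw [Finset.sum_congr rfl key]
  have h3 := Finset.sum_range_sub' (fun i => u (a + i)) (n - a)
  simp only [Nat.add_succ, Nat.add_zero] at h3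
  rw [h3, show a + (n - a) = n by omega]
  have h4 : u n = 0 := by
    simp only [hu, Nat.choose_eq_zero_of_lt (show n - 1 < n by omega)]
    push_cast; ring
  rw [h4, hu]
  simp only
  rw [sub_zero]

set_option maxHeartbeats 1000000 in
theorem main_general (a : ℕ) (ha : 2 ≤ a) (t : ℕ) (ht : 2 ≤ t) :
    (∫ p in (0:ℝ)..(1 / t),
        (1 - p * t) * (1 - p)⁻¹ * betaDens a (a * (t - 1)) p)
      = binomProb (a * t - 1) (1 / t) a
          - (1 / ((a : ℝ) * ((t : ℝ) - 1) - 1)) *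
              ∑ k ∈ Finset.Icc (a + 1) (a * t - 1), binomProb (a * t - 1) (1 / t) k := by
  set b := a * (t - 1) with hbdef
  set n := a * t - 1 with hndef
  have hmul : a * t = a * (t - 1) + a := by
    conv_lhs => rw [show t = (t - 1) + 1 by omega]
    ring
  have hab : a ≤ b := by
    have := Nat.le_mul_of_pos_right a (show 0 < t - 1 by omega)
    omega
  have hb2 : 2 ≤ b := by omega
  have hn_eq : n = a + b - 1 := by omega
  have han : a + 1 ≤ n := by omega
  -- cast facts
  have ht1 : (1:ℕ) ≤ t := by omega
  have hbR : ((b:ℕ):ℝ) = (a:ℝ) * ((t:ℝ) - 1) := by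
    rw [hbdef, Nat.cast_mul, Nat.cast_sub ht1, Nat.cast_one]
  have hmR : ((b - 1 : ℕ):ℝ) = (a:ℝ) * ((t:ℝ) - 1) - 1 := by
    rw [Nat.cast_sub (by omega : 1 ≤ b), Nat.cast_one, hbR]
  have htpos : (0:ℝ) < (t:ℝ) := by exact_mod_cast (by omega : 0 < t)
  have ht2R : (2:ℝ) ≤ (t:ℝ) := by exact_mod_cast ht
  have hnR : ((n:ℕ):ℝ) = (a:ℝ) * (t:ℝ) - 1 := by
    have h1 : n + 1 = a * t := by omega
    have h2 : ((n:ℝ) + 1) = (a:ℝ) * t := by exact_mod_cast congrArg (Nat.cast : ℕ → ℝ) h1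
    linarith
  -- rewrite betaDens arg and the coefficient
  rw [show (a:ℝ) * ((t:ℝ) - 1) = ((b:ℕ):ℝ) from hbR.symm]
  rw [show ((b:ℕ):ℝ) - 1 = ((b-1:ℕ):ℝ) from by rw [Nat.cast_sub (by omega : 1 ≤ b), Nat.cast_one]]
  -- bounds on x = 1/t
  have hx0 : (0:ℝ) < 1 / (t:ℝ) := by positivity
  have hxlt1 : 1 / (t:ℝ) < 1 := by
    rw [div_lt_one htpos]; linarith
  -- Step B : integral congruence
  have hcongr : (∫ p in (0:ℝ)..(1 / (t:ℝ)),
        (1 - p * t) * (1 - p)⁻¹ * betaDens a b p)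
      = ∫ p in (0:ℝ)..(1 / (t:ℝ)),
          (p ^ (a-1) * (1-p) ^ (b-2) - (t:ℝ) * (p ^ a * (1-p) ^ (b-2))) / Betafn a b := by
    apply intervalIntegral.integral_congr
    intro p hp
    rw [Set.uIcc_of_le (le_of_lt hx0)] at hp
    obtain ⟨hp0, hp1⟩ := hp
    have h1p : (1:ℝ) - p ≠ 0 := by
      have : p < 1 := lt_of_le_of_lt hp1 hxlt1
      intro h; linarith [this]
    simp only [betaDens]
    have e1 : ((a:ℝ) - 1) = ((a - 1 : ℕ) : ℝ) := by
      rw [Nat.cast_sub (by omega : 1 ≤ a), Nat.cast_one]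
    have e2 : ((b:ℝ) - 1) = ((b - 1 : ℕ) : ℝ) := by
      rw [Nat.cast_sub (by omega : 1 ≤ b), Nat.cast_one]
    rw [e1, e2, Real.rpow_natCast, Real.rpow_natCast]
    rw [show b - 1 = (b - 2) + 1 by omega, pow_succ]
    have hpa : p ^ a = p ^ (a-1) * p := by
      conv_lhs => rw [show a = (a-1) + 1 by omega]
      rw [pow_succ]
    rw [hpa, mul_div_assoc']
    congr 1
    field_simp
  rw [hcongr]
  -- Step C : split
  have hInt1 : IntervalIntegrable (fun p : ℝ => p ^ (a-1) * (1-p) ^ (b-2))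
      MeasureTheory.volume 0 (1/(t:ℝ)) := by
    apply Continuous.intervalIntegrable; fun_prop
  have hInt2 : IntervalIntegrable (fun p : ℝ => (t:ℝ) * (p ^ a * (1-p) ^ (b-2)))
      MeasureTheory.volume 0 (1/(t:ℝ)) := by
    apply Continuous.intervalIntegrable; fun_prop
  rw [intervalIntegral.integral_div, intervalIntegral.integral_sub hInt1 hInt2,
      intervalIntegral.integral_const_mul]
  -- apply integral_pow_eq
  have hI1 := integral_pow_eq (n-1) a (by omega) (by omega) (1/(t:ℝ))
  rw [show (n-1) - a = b - 2 by omega] at hI1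
  have hI2 := integral_pow_eq n (a+1) (by omega) (by omega) (1/(t:ℝ))
  rw [show (a+1) - 1 = a from rfl, show n - (a+1) = b - 2 by omega] at hI2
  have hI2' : (∫ p in (0:ℝ)..(1/(t:ℝ)), p ^ a * (1-p) ^ (b-2))
      = Ssum n (a+1) (1/(t:ℝ)) / (((a:ℝ)+1) * n.choose (a+1)) := by
    rw [hI2]; push_cast; ring_nf
  rw [hI1, hI2']
  -- Betafn value
  rw [Betafn_nat a b (by omega) (by omega), show a + b - 1 = n by omega]
  -- RHS as Ssum
  have hRHS : (∑ k ∈ Finset.Icc (a + 1) n, binomProb n (1/(t:ℝ)) k)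
      = Ssum n (a+1) (1/(t:ℝ)) := rfl
  rw [hRHS]
  -- final algebra
  set x : ℝ := 1 / (t:ℝ) with hxdef
  set v : ℝ := Ssum n (a+1) x with hvdef
  set A : ℝ := (n.choose a : ℝ) with hA
  set A' : ℝ := ((n-1).choose a : ℝ) with hA'
  set A'' : ℝ := (n.choose (a+1) : ℝ) with hA''
  set m : ℝ := ((b-1:ℕ):ℝ) with hm
  have hu : Ssum (n-1) a x = v + A' * x ^ a * (1-x) ^ (n-a) := by
    have := Ssum_sub n a han x
    rw [← hvdef, ← hA'] at this
    linarith
  have hE1 : ((n:ℕ):ℝ) * A' = m * A := by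
    have h := Nat.choose_mul_succ_eq (n-1) a
    rw [show (n-1) + 1 = n by omega, show n - a = b - 1 by omega] at h
    have := congrArg (Nat.cast : ℕ → ℝ) h
    push_cast at this
    rw [hA', hA, hm]
    push_cast
    linarith
  have hE2 : ((a:ℝ)+1) * A'' = m * A := by
    have h := Nat.choose_succ_right_eq n a
    rw [show n - a = b - 1 by omega] at h
    have := congrArg (Nat.cast : ℕ → ℝ) h
    push_cast at this
    rw [hA'', hA, hm]
    push_cast
    linarith
  have hm0 : m ≠ 0 := by
    rw [hm]
    have : (1:ℕ) ≤ b - 1 := by omega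
    have : (1:ℝ) ≤ ((b-1:ℕ):ℝ) := by exact_mod_cast this
    linarith
  have hA0 : A ≠ 0 := by
    rw [hA]
    have := Nat.choose_pos (show a ≤ n by omega)
    positivity
  have hA'0 : A' ≠ 0 := by
    rw [hA']
    have := Nat.choose_pos (show a ≤ n - 1 by omega)
    positivity
  have hA''0 : A'' ≠ 0 := by
    rw [hA'']
    have := Nat.choose_pos (show a + 1 ≤ n by omega)
    positivity
  have haR : (a:ℝ) ≠ 0 := by
    have : (2:ℝ) ≤ (a:ℝ) := by exact_mod_cast ha
    linarith
  have ha1R : (a:ℝ) + 1 ≠ 0 := by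
    have : (0:ℝ) ≤ (a:ℝ) := Nat.cast_nonneg a
    linarith
  have hnR0 : ((n:ℕ):ℝ) ≠ 0 := by
    rw [hnR]; nlinarith
  have htR0 : (t:ℝ) ≠ 0 := ne_of_gt htpos
  -- express A' and A'' and finish
  have hA'eq : A' = m * A / ((n:ℕ):ℝ) := by
    field_simp
    linarith [hE1]
  have hA''eq : A'' = m * A / ((a:ℝ)+1) := by
    field_simp
    linarith [hE2]
  rw [hu, hA'eq, hA''eq, hnR]
  unfold binomProb
  rw [← hA]
  have habt : (a:ℝ) * (t:ℝ) - 1 ≠ 0 := by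
    have h4 : (4:ℝ) ≤ (a:ℝ) * (t:ℝ) := by exact_mod_cast Nat.mul_le_mul ha ht
    intro h; linarith
  field_simp
  ring

theorem part2 (a : ℕ) (ha : 2 ≤ a) :
    (∫ p in (0:ℝ)..(1 / 2),
        (1 - p * 2) * (1 - p)⁻¹ * betaDens a a p)
      = (1 + 1 / ((a : ℝ) - 1)) * (Nat.choose (2 * a - 1) a : ℝ) / 2 ^ (2 * a - 1)
          - 1 / (2 * ((a : ℝ) - 1)) := by
  have G := main_general a ha 2 (le_refl 2)
  have hc2 : ((2:ℕ):ℝ) = (2:ℝ) := by norm_num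
  rw [hc2] at G
  norm_num at G
  rw [show a * 2 - 1 = 2 * a - 1 by omega] at G
  rw [G]
  -- nat binomial sum facts
  have htot : ∑ k ∈ Finset.range (2 * a), (2 * a - 1).choose k = 2 ^ (2 * a - 1) := by
    have := Nat.sum_range_choose (2 * a - 1)
    rwa [show 2 * a - 1 + 1 = 2 * a by omega] at this
  have hhalf : ∑ k ∈ Finset.range a, (2 * a - 1).choose k = 4 ^ (a - 1) := by
    have := Nat.sum_range_choose_halfway (a - 1)
    rwa [show (a - 1) + 1 = a by omega, show 2 * (a - 1) + 1 = 2 * a - 1 by omega] at this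
  have hpow : 2 ^ (2 * a - 1) = 2 * 4 ^ (a - 1) := by
    rw [show 2 * a - 1 = 2 * (a - 1) + 1 by omega, pow_succ, pow_mul]
    ring
  have hsplit : ∑ k ∈ Finset.range (2 * a), (2 * a - 1).choose k
      = ∑ k ∈ Finset.range a, (2 * a - 1).choose k
        + ∑ k ∈ Finset.Icc a (2 * a - 1), (2 * a - 1).choose k := by
    have h := Finset.sum_Ico_consecutive (fun k => (2 * a - 1).choose k)
      (show 0 ≤ a by omega) (show a ≤ 2 * a by omega)
    rw [← Finset.range_eq_Ico, ← Finset.range_eq_Ico] at h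
    have he : Finset.Ico a (2 * a) = Finset.Icc a (2 * a - 1) := by
      ext x; simp only [Finset.mem_Ico, Finset.mem_Icc]; omega
    rw [he] at h
    omega
  have hIcc : ∑ k ∈ Finset.Icc a (2 * a - 1), (2 * a - 1).choose k = 4 ^ (a - 1) := by omega
  have hinsert : Finset.Icc a (2 * a - 1) = insert a (Finset.Icc (a + 1) (2 * a - 1)) := by
    ext x
    simp only [Finset.mem_Icc, Finset.mem_insert]
    omega
  have hub : (2 * a - 1).choose a + ∑ k ∈ Finset.Icc (a + 1) (2 * a - 1), (2 * a - 1).choose k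
      = 4 ^ (a - 1) := by
    rw [← hIcc, hinsert, Finset.sum_insert (by simp)]
  -- real versions
  set C : ℝ := ((2 * a - 1).choose a : ℝ) with hC
  have hCsumR : ∑ k ∈ Finset.Icc (a + 1) (2 * a - 1), binomProb (2 * a - 1) (1 / 2) k
      = (4 ^ (a - 1) - C) * (1 / 2) ^ (2 * a - 1) := by
    have h1 : ∀ k ∈ Finset.Icc (a + 1) (2 * a - 1),
        binomProb (2 * a - 1) (1 / 2) k = ((2 * a - 1).choose k : ℝ) * (1 / 2) ^ (2 * a - 1) := by
      intro k hk
      simp only [Finset.mem_Icc] at hk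
      unfold binomProb
      rw [show (1:ℝ) - 1 / 2 = 1 / 2 by norm_num, mul_assoc, ← pow_add,
          show k + (2 * a - 1 - k) = 2 * a - 1 by omega]
    rw [Finset.sum_congr rfl h1, ← Finset.sum_mul, ← Nat.cast_sum]
    congr 1
    have := congrArg (Nat.cast : ℕ → ℝ) hub
    push_cast at this
    rw [hC]
    push_cast
    linarith
  have hbinR : binomProb (2 * a - 1) (1 / 2) a = C * (1 / 2) ^ (2 * a - 1) := by
    unfold binomProb
    rw [show (1:ℝ) - 1 / 2 = 1 / 2 by norm_num, mul_assoc, ← pow_add,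
        show a + (2 * a - 1 - a) = 2 * a - 1 by omega, hC]
  rw [hCsumR, hbinR]
  have ha1 : (a:ℝ) - 1 ≠ 0 := by
    have : (2:ℝ) ≤ (a:ℝ) := by exact_mod_cast ha
    intro h; linarith
  have h2pow : ((2:ℝ)) ^ (2 * a - 1) ≠ 0 := by positivity
  have hhalfpow : ((1:ℝ) / 2) ^ (2 * a - 1) = 1 / 2 ^ (2 * a - 1) := by
    rw [div_pow, one_pow]
  have h4pow : ((4:ℝ)) ^ (a - 1) = 2 ^ (2 * a - 1) / 2 := by
    have := congrArg (Nat.cast : ℕ → ℝ) hpow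
    push_cast at this
    linarith
  rw [hhalfpow, h4pow]
  field_simp
  ring

/-- For integers `a ≥ 2` and `t ≥ 2`,
`∫_0^{1/t}(1 − pt)(1−p)^{−1} β_{a,a(t−1)}(p) dp = P(X = a) − P(X > a)/(a(t−1)−1)`
with `X ~ Binomial(at−1, 1/t)`; in particular for `t = 2` this quantity equals
`(1 + 1/(a−1))·C(2a−1, a)·2^{−(2a−1)} − 1/(2(a−1))`. -/
theorem polya_start_on_line_integral (a : ℕ) (ha : 2 ≤ a) :
    (∀ t : ℕ, 2 ≤ t →
      (∫ p in (0:ℝ)..(1 / t),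
          (1 - p * t) * (1 - p)⁻¹ * betaDens a (a * (t - 1)) p)
        = binomProb (a * t - 1) (1 / t) a
            - (1 / ((a : ℝ) * ((t : ℝ) - 1) - 1)) *
                ∑ k ∈ Finset.Icc (a + 1) (a * t - 1), binomProb (a * t - 1) (1 / t) k) ∧
    (∫ p in (0:ℝ)..(1 / 2),
        (1 - p * 2) * (1 - p)⁻¹ * betaDens a a p)
      = (1 + 1 / ((a : ℝ) - 1)) * (Nat.choose (2 * a - 1) a : ℝ) / 2 ^ (2 * a - 1)
          - 1 / (2 * ((a : ℝ) - 1)) := by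
  exact ⟨fun t ht => main_general a ha t ht, part2 a ha⟩
end

section
/- For integers r < b (both ≥ 1), 2·∫_0^{1/2} β_{b,r}(p) dp = 2·P(X ≤ r−1) where X ~ Binomial(b+r−1, 1/2); equivalently ∫_0^{1}min(1, p/(1−p))^{b−r} β_{r,b}(p) dp = 2∫_0^{1/2} β_{b,r}(p) dp. -/
open Finset intervalIntegral Set



lemma key_deriv (a m : ℕ) (x : ℝ) :
    HasDerivAt (fun y : ℝ => ∑ j ∈ Finset.range (m+1),
        ((a+m+1).choose (a+1+j) : ℝ) * y^(a+1+j) * (1-y)^(m-j))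
      (((a+m+1) * (a+m).choose a : ℝ) * (x^a * (1-x)^m)) x := by
  have hterm : ∀ j, HasDerivAt (fun y : ℝ =>
      ((a+m+1).choose (a+1+j) : ℝ) * y^(a+1+j) * (1-y)^(m-j))
      ((((a+m+1).choose (a+1+j) * (a+1+j) : ℕ) : ℝ) * (x^(a+j) * (1-x)^(m-j))
        - (((a+m+1).choose (a+1+j) * (m-j) : ℕ) : ℝ) * (x^(a+1+j) * (1-x)^(m-j-1))) x := by
    intro j
    have h1 : HasDerivAt (fun y : ℝ => 1 - y) (-1) x := (hasDerivAt_id x).const_sub 1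
    have hv : HasDerivAt (fun y : ℝ => (1-y)^(m-j))
        ((((m-j):ℕ):ℝ) * (1-x)^(m-j-1) * (-1)) x :=
      (hasDerivAt_pow (m-j) (1-x)).comp x h1
    have hu : HasDerivAt (fun y : ℝ => ((a+m+1).choose (a+1+j) : ℝ) * y^(a+1+j))
        (((a+m+1).choose (a+1+j) : ℝ) * ((((a+1+j):ℕ):ℝ) * x^(a+j))) x := by
      have := (hasDerivAt_pow (a+1+j) x).const_mul (((a+m+1).choose (a+1+j) : ℝ))
      simpa [show a+1+j-1 = a+j by omega] using this
    have : HasDerivAt (fun y : ℝ => ((a+m+1).choose (a+1+j) : ℝ) * y^(a+1+j) * (1-y)^(m-j)) _ x := hu.mul hv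
    convert this using 1
    push_cast
    ring
  have hsum : HasDerivAt (fun y : ℝ => ∑ j ∈ Finset.range (m+1),
        ((a+m+1).choose (a+1+j) : ℝ) * y^(a+1+j) * (1-y)^(m-j))
      (∑ j ∈ Finset.range (m+1), ((((a+m+1).choose (a+1+j) * (a+1+j) : ℕ) : ℝ) * (x^(a+j) * (1-x)^(m-j))
          - (((a+m+1).choose (a+1+j) * (m-j) : ℕ) : ℝ) * (x^(a+1+j) * (1-x)^(m-j-1)))) x :=
    HasDerivAt.fun_sum (fun j (_ : j ∈ Finset.range (m+1)) => hterm j)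
  convert hsum using 1
  rw [Finset.sum_sub_distrib]
  rw [Finset.sum_range_succ' (fun j => (((a+m+1).choose (a+1+j) * (a+1+j) : ℕ) : ℝ) * (x^(a+j) * (1-x)^(m-j)))]
  rw [Finset.sum_range_succ (fun j => (((a+m+1).choose (a+1+j) * (m-j) : ℕ) : ℝ) * (x^(a+1+j) * (1-x)^(m-j-1)))]
  have hU : ∀ j ∈ Finset.range m,
      (((a+m+1).choose (a+1+(j+1)) * (a+1+(j+1)) : ℕ) : ℝ) * (x^(a+(j+1)) * (1-x)^(m-(j+1)))
        = (((a+m+1).choose (a+1+j) * (m-j) : ℕ) : ℝ) * (x^(a+1+j) * (1-x)^(m-j-1)) := by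
    intro j hj
    have hc : (a+m+1).choose (a+1+j+1) * (a+1+j+1) = (a+m+1).choose (a+1+j) * (m-j) := by
      rw [Nat.choose_succ_right_eq]
      congr 1
      omega
    rw [show a+1+(j+1) = a+1+j+1 by omega, hc, show a+(j+1) = a+1+j by omega,
      show m-(j+1) = m-j-1 by omega]
  rw [Finset.sum_congr rfl hU]
  simp only [Nat.sub_self, Nat.mul_zero, Nat.cast_zero, zero_mul, add_zero,
    add_sub_cancel_left, Nat.add_zero, Nat.sub_zero]
  rw [show (a+m+1).choose (a+1) * (a+1) = (a+m+1) * (a+m).choose a from by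
    simpa [Nat.succ_eq_add_one] using (Nat.add_one_mul_choose_eq (a+m) a).symm]
  push_cast
  ring

lemma key_integral (a m : ℕ) (x : ℝ) :
    ((a+m+1) * (a+m).choose a : ℝ) * ∫ p in (0:ℝ)..x, p^a * (1-p)^m
      = ∑ j ∈ Finset.range (m+1), ((a+m+1).choose (a+1+j) : ℝ) * x^(a+1+j) * (1-x)^(m-j) := by
  rw [← intervalIntegral.integral_const_mul]
  rw [intervalIntegral.integral_eq_sub_of_hasDerivAt (fun t _ => key_deriv a m t)
    ((Continuous.intervalIntegrable (by fun_prop) _ _))]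
  have h0 : ∀ j : ℕ, (0:ℝ)^(a+1+j) = 0 := fun j => zero_pow (by omega)
  simp [h0]

lemma betaDens_eq (α β : ℕ) (hα : 1 ≤ α) (hβ : 1 ≤ β) (p : ℝ) :
    betaDens α β p = p^(α-1) * (1-p)^(β-1) / Betafn α β := by
  unfold betaDens
  rw [show ((α:ℝ) - 1) = ((α - 1 : ℕ):ℝ) by rw [Nat.cast_sub hα, Nat.cast_one],
    show ((β:ℝ) - 1) = ((β - 1 : ℕ):ℝ) by rw [Nat.cast_sub hβ, Nat.cast_one],
    Real.rpow_natCast, Real.rpow_natCast]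

lemma Betafn_eq (α β : ℕ) (hα : 1 ≤ α) (hβ : 1 ≤ β) :
    Betafn (α:ℝ) (β:ℝ) = ∫ p in (0:ℝ)..1, p^(α-1) * (1-p)^(β-1) := by
  unfold Betafn
  refine intervalIntegral.integral_congr fun p _ => ?_
  rw [show ((α:ℝ) - 1) = ((α - 1 : ℕ):ℝ) by rw [Nat.cast_sub hα, Nat.cast_one],
    show ((β:ℝ) - 1) = ((β - 1 : ℕ):ℝ) by rw [Nat.cast_sub hβ, Nat.cast_one],
    Real.rpow_natCast, Real.rpow_natCast]

lemma int_one (a m : ℕ) :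
    ((a+m+1) * (a+m).choose a : ℝ) * ∫ p in (0:ℝ)..1, p^a * (1-p)^m = 1 := by
  rw [key_integral a m 1]
  rw [Finset.sum_eq_single m]
  · rw [show a+1+m = a+m+1 by omega]; simp
  · intro j hj hjm
    have : (1:ℝ) - 1 = 0 := by ring
    rw [this, zero_pow (by simp at hj; omega)]
    ring
  · simp

lemma int_half (a m : ℕ) :
    ((a+m+1) * (a+m).choose a : ℝ) * ∫ p in (0:ℝ)..(1/2), p^a * (1-p)^m
      = ∑ j ∈ Finset.range (m+1), ((a+m+1).choose (a+1+j) : ℝ) * (1/2)^(a+m+1) := by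
  rw [key_integral a m (1/2)]
  refine Finset.sum_congr rfl fun j hj => ?_
  simp only [Finset.mem_range] at hj
  rw [show (1:ℝ) - 1/2 = 1/2 by norm_num, mul_assoc, ← pow_add,
    show a+1+j+(m-j) = a+m+1 by omega]

lemma sum_choose_symm (a m : ℕ) :
    ∑ j ∈ Finset.range (m+1), ((a+m+1).choose (a+1+j) : ℝ)
      = ∑ k ∈ Finset.range (m+1), ((a+m+1).choose k : ℝ) := by
  have h : ∀ j ∈ Finset.range (m+1),
      ((a+m+1).choose (a+1+j) : ℝ) = ((a+m+1).choose (m-j) : ℝ) := by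
    intro j hj
    simp only [Finset.mem_range] at hj
    rw [show m - j = (a+m+1) - (a+1+j) by omega, Nat.choose_symm (by omega)]
  rw [Finset.sum_congr rfl h,
    ← Finset.sum_range_reflect (fun k => ((a+m+1).choose k : ℝ)) (m+1)]
  exact Finset.sum_congr rfl fun j hj => by
    simp only [Finset.mem_range] at hj
    rw [show m+1-1-j = m-j by omega]

lemma Betafn_symm (α β : ℕ) (hα : 1 ≤ α) (hβ : 1 ≤ β) :
    Betafn (α:ℝ) (β:ℝ) = Betafn (β:ℝ) (α:ℝ) := by
  rw [Betafn_eq α β hα hβ, Betafn_eq β α hβ hα]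
  have h := intervalIntegral.integral_comp_sub_left (a := (0:ℝ)) (b := 1)
    (fun u => (1-u)^(α-1) * u^(β-1)) 1
  simp only [sub_sub_cancel, sub_zero, sub_self] at h
  rw [h]
  exact intervalIntegral.integral_congr fun p _ => by ring

lemma flip_half (a m : ℕ) :
    ∫ p in (1/2:ℝ)..1, p^m * (1-p)^a = ∫ p in (0:ℝ)..(1/2), p^a * (1-p)^m := by
  have h := intervalIntegral.integral_comp_sub_left (a := (1/2:ℝ)) (b := 1)
    (fun u => (1-u)^m * u^a) 1
  simp only [sub_sub_cancel, sub_self] at h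
  norm_num at h
  rw [h]
  exact intervalIntegral.integral_congr fun p _ => by ring

/-- For integers `1 ≤ r < b`:
`∫_0^1 min(1, p/(1−p))^{b−r} β_{r,b}(p) dp = 2∫_0^{1/2} β_{b,r}(p) dp` and
`2∫_0^{1/2} β_{b,r}(p) dp = 2 P(X_{b+r−1,1/2} ≤ r−1)`. -/
theorem polya_equalization (r b : ℕ) (hr : 1 ≤ r) (hrb : r < b) :
    (∫ p in (0:ℝ)..1, (min 1 (p / (1 - p))) ^ (b - r) * betaDens r b p)
      = 2 * ∫ p in (0:ℝ)..(1 / 2), betaDens b r p ∧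
    2 * (∫ p in (0:ℝ)..(1 / 2), betaDens b r p)
      = 2 * ∑ k ∈ Finset.range r, binomProb (b + r - 1) (1 / 2) k := by
  obtain ⟨m, rfl⟩ : ∃ m, r = m + 1 := ⟨r - 1, by omega⟩
  obtain ⟨d, rfl⟩ : ∃ d, b = m + d + 2 := ⟨b - m - 2, by omega⟩
  set a := m + d + 1 with ha
  set K : ℝ := ((a+m+1) * (a+m).choose a : ℝ) with hKdef
  set B : ℝ := Betafn ((m+d+2:ℕ):ℝ) ((m+1:ℕ):ℝ) with hBdef
  set B' : ℝ := Betafn ((m+1:ℕ):ℝ) ((m+d+2:ℕ):ℝ) with hB'def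
  have hBB' : B' = B := Betafn_symm (m+1) (m+d+2) (by omega) (by omega)
  have hB_int : B = ∫ p in (0:ℝ)..1, p^a * (1-p)^m := by
    rw [hBdef, Betafn_eq (m+d+2) (m+1) (by omega) (by omega),
      show m+d+2-1 = a by omega, show m+1-1 = m by omega]
  have hKB : K * B = 1 := by rw [hB_int]; exact int_one a m
  have hBne : B ≠ 0 := by
    intro h; rw [h, mul_zero] at hKB; norm_num at hKB
  have hBinv : B⁻¹ = K := inv_eq_of_mul_eq_one_left hKB
  have hdens_br : ∀ p : ℝ, betaDens ((m+d+2:ℕ):ℝ) ((m+1:ℕ):ℝ) p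
      = p^a * (1-p)^m / B := by
    intro p
    rw [betaDens_eq (m+d+2) (m+1) (by omega) (by omega) p,
      show m+d+2-1 = a by omega, show m+1-1 = m by omega]
  have hdens_rb : ∀ p : ℝ, betaDens ((m+1:ℕ):ℝ) ((m+d+2:ℕ):ℝ) p
      = p^m * (1-p)^a / B' := by
    intro p
    rw [betaDens_eq (m+1) (m+d+2) (by omega) (by omega) p,
      show m+d+2-1 = a by omega, show m+1-1 = m by omega]
  -- the half integral of betaDens b r
  have hhalf : (∫ p in (0:ℝ)..(1/2), betaDens ((m+d+2:ℕ):ℝ) ((m+1:ℕ):ℝ) p)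
      = ∑ j ∈ Finset.range (m+1), ((a+m+1).choose (a+1+j) : ℝ) * (1/2)^(a+m+1) := by
    have : (∫ p in (0:ℝ)..(1/2), betaDens ((m+d+2:ℕ):ℝ) ((m+1:ℕ):ℝ) p)
        = (∫ p in (0:ℝ)..(1/2), p^a * (1-p)^m) / B := by
      simp only [hdens_br]
      rw [intervalIntegral.integral_div]
    rw [this, div_eq_mul_inv, hBinv, mul_comm]
    exact int_half a m
  constructor
  · -- first conjunct
    have hexp : m + d + 2 - (m + 1) = d + 1 := by omega
    set f : ℝ → ℝ := fun p =>
      (min 1 (p / (1 - p))) ^ (m + d + 2 - (m + 1)) * betaDens ((m+1:ℕ):ℝ) ((m+d+2:ℕ):ℝ) p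
      with hfdef
    have hfg : Set.EqOn f (fun p => p^a * (1-p)^m / B') (Set.Icc 0 (1/2)) := by
      intro p hp
      obtain ⟨hp0, hp2⟩ := hp
      have h1p : (0:ℝ) < 1 - p := by linarith
      have hmin : min 1 (p / (1 - p)) = p / (1 - p) :=
        min_eq_right ((div_le_one h1p).mpr (by linarith))
      simp only [hfdef, hmin, hexp, hdens_rb, div_pow]
      have hB'ne : B' ≠ 0 := by rw [hBB']; exact hBne
      field_simp [h1p.ne', hB'ne]
      rw [ha]
      ring
    have hfh : Set.EqOn f (fun p => p^m * (1-p)^a / B') (Set.Icc (1/2) 1) := by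
      intro p hp
      obtain ⟨hp0, hp2⟩ := hp
      by_cases hp1 : p = 1
      · subst hp1
        simp only [hfdef, hexp, sub_self, div_zero, hdens_rb]
        rw [min_eq_right (zero_le_one), zero_pow (by omega), zero_mul,
          zero_pow (by omega : a ≠ 0)]
        simp
      · have h1p : (0:ℝ) < 1 - p := by
          have : p < 1 := lt_of_le_of_ne hp2 hp1
          linarith
        have hmin : min 1 (p / (1 - p)) = 1 :=
          min_eq_left ((one_le_div h1p).mpr (by linarith))
        simp only [hfdef, hmin, hexp, one_pow, one_mul, hdens_rb]
    have hgc : Continuous (fun p : ℝ => p^a * (1-p)^m / B') := by fun_prop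
    have hhc : Continuous (fun p : ℝ => p^m * (1-p)^a / B') := by fun_prop
    have hint1 : IntervalIntegrable f MeasureTheory.volume 0 (1/2) := by
      apply ContinuousOn.intervalIntegrable
      rw [Set.uIcc_of_le (by norm_num)]
      exact hgc.continuousOn.congr hfg
    have hint2 : IntervalIntegrable f MeasureTheory.volume (1/2) 1 := by
      apply ContinuousOn.intervalIntegrable
      rw [Set.uIcc_of_le (by norm_num)]
      exact hhc.continuousOn.congr hfh
    have hsplit : (∫ p in (0:ℝ)..1, f p)
        = (∫ p in (0:ℝ)..(1/2), f p) + ∫ p in (1/2:ℝ)..1, f p :=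
      (intervalIntegral.integral_add_adjacent_intervals hint1 hint2).symm
    have he1 : (∫ p in (0:ℝ)..(1/2), f p) = (∫ p in (0:ℝ)..(1/2), p^a * (1-p)^m) / B' := by
      rw [intervalIntegral.integral_congr (g := fun p => p^a * (1-p)^m / B')
        (by rw [Set.uIcc_of_le (by norm_num)]; exact hfg)]
      rw [intervalIntegral.integral_div]
    have he2 : (∫ p in (1/2:ℝ)..1, f p) = (∫ p in (0:ℝ)..(1/2), p^a * (1-p)^m) / B' := by
      rw [intervalIntegral.integral_congr (g := fun p => p^m * (1-p)^a / B')
        (by rw [Set.uIcc_of_le (by norm_num)]; exact hfh)]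
      rw [intervalIntegral.integral_div, flip_half]
    have hrhs : (∫ p in (0:ℝ)..(1/2), betaDens ((m+d+2:ℕ):ℝ) ((m+1:ℕ):ℝ) p)
        = (∫ p in (0:ℝ)..(1/2), p^a * (1-p)^m) / B := by
      simp only [hdens_br]
      rw [intervalIntegral.integral_div]
    show (∫ p in (0:ℝ)..1, f p) = _
    rw [hsplit, he1, he2, hrhs, hBB']
    ring
  · -- second conjunct
    congr 1
    rw [hhalf, ← Finset.sum_mul, sum_choose_symm, Finset.sum_mul]
    refine Finset.sum_congr rfl fun k hk => ?_
    simp only [Finset.mem_range] at hk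
    rw [show (m+d+2)+(m+1)-1 = a+m+1 by omega]
    unfold binomProb
    rw [show (1:ℝ) - 1/2 = 1/2 by norm_num, mul_assoc, ← pow_add,
      show k + (a+m+1-k) = a+m+1 by omega]
end
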